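/- Let N ≥ 2, M ≥ 1, and J_1, …, J_N be positive integers with J_i ≤ M for each i. Consider the parameter space consisting of a core tensor G ∈ ℝ^{J_1 × ⋯ × J_N} together with factor matrices U^(i) ∈ ℝ^{M × J_i} (i = 1, …, N), identified with a Euclidean space, and equip it with Lebesgue measure. Let r = max over all partitions of {1,…,N} into nonempty disjoint sets p = {p_1,…,p_{n_1}} and q = {q_1,…,q_{n_2}} of min(J_{p_1}⋯J_{p_{n_1}}, J_{q_1}⋯J_{q_{n_2}}). Then for Lebesgue-almost every choice of parameters, the order-N tensor A defined by A_{d_1,…,d_N} = Σ_{j_1,…,j_N} G_{j_1,…,j_N} U^(1)_{d_1,j_1} ⋯ U^(N)_{d_N,j_N} has CP rank at least r; i.e., the set of parameter configurations for which the CP rank of A is less than r has Lebesgue measure zero. -/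

import Mathlib

open MeasureTheory Finset

/-- `A` admits a CP representation with `Z` terms. -/
def IsCPRepr {N M : ℕ} (A : (Fin N → Fin M) → ℝ) (Z : ℕ) : Prop :=
  ∃ (lam : Fin Z → ℝ) (a : Fin Z → Fin N → Fin M → ℝ),
    ∀ d : Fin N → Fin M, A d = ∑ z, lam z * ∏ i, a z i (d i)

/-- The CP rank of a tensor: the minimal number of rank-one terms. -/
noncomputable def cpRank {N M : ℕ} (A : (Fin N → Fin M) → ℝ) : ℕ :=
  sInf {Z | IsCPRepr A Z}

/-- The order-`N` tensor of dimension `M` in each mode obtained from the Tucker format with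
core `G` and factor matrices `U i : Fin M → Fin (J i) → ℝ`. -/
def tuckerTensor {N M : ℕ} (J : Fin N → ℕ)
    (G : (∀ i, Fin (J i)) → ℝ) (U : ∀ i : Fin N, Fin M → Fin (J i) → ℝ) :
    (Fin N → Fin M) → ℝ :=
  fun d => ∑ j : ∀ i, Fin (J i), G j * ∏ i, U i (d i) (j i)

/-! ### Auxiliary lemmas -/

/-- The zero set of a nonzero multivariate polynomial over `Fin n` variables is Lebesgue-null. -/
theorem mvpoly_zero_null_fin : ∀ (n : ℕ) (P : MvPolynomial (Fin n) ℝ), P ≠ 0 →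
    volume {x : Fin n → ℝ | MvPolynomial.eval x P = 0} = 0 := by
  intro n
  induction n with
  | zero =>
    intro P hP
    obtain ⟨c, rfl⟩ := MvPolynomial.C_surjective (Fin 0) P
    have hc : c ≠ 0 := fun h => hP (by simp [h])
    have he : {x : Fin 0 → ℝ | MvPolynomial.eval x (MvPolynomial.C c) = 0} = ∅ := by
      ext x; simp [hc]
    rw [he]; simp
  | succ n ih =>
    intro P hP
    set Q := MvPolynomial.finSuccEquiv ℝ n P with hQdef
    have hQ : Q ≠ 0 := by
      simp only [hQdef, ne_eq, EmbeddingLike.map_eq_zero_iff]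
      exact hP
    have hlc : Q.leadingCoeff ≠ 0 := Polynomial.leadingCoeff_ne_zero.mpr hQ
    set S : Set ((Fin n → ℝ) × ℝ) :=
      {p | MvPolynomial.eval (Fin.cons p.2 p.1) P = 0} with hSdef
    have hcont : Continuous fun p : (Fin n → ℝ) × ℝ =>
        MvPolynomial.eval (Fin.cons p.2 p.1) P := by
      apply (MvPolynomial.continuous_eval (p := P)).comp
      apply continuous_pi
      intro i
      refine Fin.cases ?_ ?_ i
      · simpa using continuous_snd
      · intro j; simpa [Function.comp_def] using (continuous_apply j).comp continuous_fst
    have hSm : MeasurableSet S := hcont.measurable (measurableSet_singleton 0)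
    have hS : volume S = 0 := by
      rw [show (volume : Measure ((Fin n → ℝ) × ℝ)) = Measure.prod volume volume from rfl,
        Measure.measure_prod_null hSm]
      have hae : ∀ᵐ x : Fin n → ℝ, MvPolynomial.eval x Q.leadingCoeff ≠ 0 := by
        have := ih Q.leadingCoeff hlc
        rw [ae_iff]
        simpa using this
      filter_upwards [hae] with x hx
      have hmap : (Q.map (MvPolynomial.eval x)) ≠ 0 := by
        intro h
        apply hx
        have h2 := Polynomial.coeff_map (p := Q) (MvPolynomial.eval x) Q.natDegree
        rw [h] at h2
        rw [Polynomial.coeff_zero] at h2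
        rw [Polynomial.leadingCoeff]
        exact h2.symm
      have hfin : {y : ℝ | (Q.map (MvPolynomial.eval x)).IsRoot y}.Finite :=
        Polynomial.finite_setOf_isRoot hmap
      have hpre : (Prod.mk x ⁻¹' S) = {y : ℝ | (Q.map (MvPolynomial.eval x)).IsRoot y} := by
        ext y
        simp only [hSdef, Set.mem_preimage, Set.mem_setOf_eq, Polynomial.IsRoot]
        rw [MvPolynomial.eval_eq_eval_mv_eval']
      simp only [hpre]
      exact hfin.measure_zero _
    have hmp := MeasureTheory.volume_preserving_piFinSuccAbove (fun _ : Fin (n+1) => ℝ) 0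
    have hswap : MeasurePreserving (Prod.swap : ℝ × (Fin n → ℝ) → (Fin n → ℝ) × ℝ)
        volume volume := by
      rw [show (volume : Measure (ℝ × (Fin n → ℝ))) = Measure.prod volume volume from rfl,
        show (volume : Measure ((Fin n → ℝ) × ℝ)) = Measure.prod volume volume from rfl]
      exact Measure.measurePreserving_swap
    have hcomp := hswap.comp hmp
    have hset : {x : Fin (n+1) → ℝ | MvPolynomial.eval x P = 0}
        = (Prod.swap ∘ (MeasurableEquiv.piFinSuccAbove (fun _ : Fin (n+1) => ℝ) 0)) ⁻¹' S := by
      ext x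
      have hx : (Fin.cons (x 0) (fun j => x (Fin.succAbove 0 j)) : Fin (n+1) → ℝ) = x := by
        funext i
        refine Fin.cases ?_ ?_ i
        · simp
        · intro j; simp [Fin.succAbove]
      rw [Set.mem_setOf_eq, Set.mem_preimage]
      rw [show ((Prod.swap ∘ (MeasurableEquiv.piFinSuccAbove (fun _ : Fin (n+1) => ℝ) 0)) x)
          = ((fun j => x (Fin.succAbove 0 j)), x 0) from rfl]
      show _ ↔ MvPolynomial.eval (Fin.cons (x 0) fun j => x (Fin.succAbove 0 j)) P = 0
      rw [hx]
    rw [hset]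
    exact hcomp.measure_preimage hSm.nullMeasurableSet |>.trans hS

/-- The zero set of a nonzero multivariate polynomial over any finite variable type is null. -/
theorem mvpoly_zero_null {ι : Type*} [Fintype ι] (P : MvPolynomial ι ℝ) (hP : P ≠ 0) :
    volume {x : ι → ℝ | MvPolynomial.eval x P = 0} = 0 := by
  classical
  set n := Fintype.card ι with hn
  obtain e : ι ≃ Fin n := Fintype.equivFin ι
  set P' : MvPolynomial (Fin n) ℝ := MvPolynomial.rename e P with hP'def
  have hP' : P' ≠ 0 := fun h => hP ((MvPolynomial.rename_injective e e.injective).eq_iff.mp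
    (by simpa using h))
  have hmp : MeasurePreserving (MeasurableEquiv.arrowCongr' e (MeasurableEquiv.refl ℝ))
      (volume : Measure (ι → ℝ)) (volume : Measure (Fin n → ℝ)) :=
    MeasureTheory.volume_preserving_arrowCongr' _ _ (MeasurePreserving.id _)
  have htgt : MeasurableSet {y : Fin n → ℝ | MvPolynomial.eval y P' = 0} :=
    (MvPolynomial.continuous_eval (p := P')).measurable (measurableSet_singleton 0)
  have hset : {x : ι → ℝ | MvPolynomial.eval x P = 0}
      = (MeasurableEquiv.arrowCongr' e (MeasurableEquiv.refl ℝ)) ⁻¹'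
        {y : Fin n → ℝ | MvPolynomial.eval y P' = 0} := by
    ext x
    simp only [Set.mem_setOf_eq, Set.mem_preimage, hP'def]
    rw [show ((MeasurableEquiv.arrowCongr' e (MeasurableEquiv.refl ℝ)) x : Fin n → ℝ)
        = fun j => x (e.symm j) from rfl]
    rw [MvPolynomial.eval_rename]
    have : ((fun j => x (e.symm j)) ∘ e) = x := by funext i; simp
    rw [this]
  rw [hset, hmp.measure_preimage htgt.nullMeasurableSet]
  exact mvpoly_zero_null_fin n P' hP'

/-- Transfer of null sets along a linear equivalence from a Euclidean pi space. -/
theorem null_of_linearEquiv_preimage {ι : Type*} [Fintype ι]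
    {X : Type*} [AddCommGroup X] [Module ℝ X] [TopologicalSpace X] [IsTopologicalAddGroup X]
    [ContinuousSMul ℝ X] [T2Space X] [MeasureSpace X] [BorelSpace X]
    [LocallyCompactSpace X] [SecondCountableTopology X]
    [Measure.IsAddHaarMeasure (volume : Measure X)]
    (e : (ι → ℝ) ≃ₗ[ℝ] X) {S : Set X} (hS : MeasurableSet S)
    (h : volume (e ⁻¹' S) = 0) : volume S = 0 := by
  have hec : Continuous e := LinearMap.continuous_of_finiteDimensional e.toLinearMap
  have hem : Measurable e := hec.measurable
  set ν : Measure X := Measure.map e volume with hν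
  haveI : ν.IsAddHaarMeasure := Measure.MapLinearEquiv.isAddHaarMeasure _ e
  have hac : (volume : Measure X) ≪ ν :=
    Measure.absolutelyContinuous_isAddHaarMeasure _ _
  have hν0 : ν S = 0 := by
    rw [hν, Measure.map_apply hem hS]
    exact h
  exact hac hν0

/-- Every tensor admits a CP representation. -/
theorem exists_cp {N M : ℕ} (A : (Fin N → Fin M) → ℝ) :
    IsCPRepr A (Fintype.card (Fin N → Fin M)) := by
  classical
  set e := (Fintype.equivFin (Fin N → Fin M)).symm with he
  refine ⟨fun z => A (e z), fun z i m => if e z i = m then 1 else 0, ?_⟩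
  intro d
  rw [Fintype.sum_equiv e (fun z => A (e z) * ∏ i, if e z i = d i then (1:ℝ) else 0)
    (fun u => A u * ∏ i, if u i = d i then (1:ℝ) else 0) (fun z => rfl)]
  have hp : ∀ u : Fin N → Fin M, (∏ i, if u i = d i then (1:ℝ) else 0)
      = if u = d then 1 else 0 := by
    intro u
    rw [Finset.prod_boole]
    congr 1
    simp [funext_iff]
  simp_rw [hp, mul_ite, mul_one, mul_zero]
  rw [Finset.sum_ite_eq' Finset.univ d A]
  simp

/-- Merge of two partial index assignments along a subset `s` of the modes. -/
def mrg {N M : ℕ} (s : Finset (Fin N)) (p : {i // i ∈ s} → Fin M)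
    (q : {i // i ∈ sᶜ} → Fin M) : Fin N → Fin M :=
  fun i => if h : i ∈ s then p ⟨i, h⟩ else q ⟨i, Finset.mem_compl.mpr h⟩

theorem rank_le_of_cp {N M Z r : ℕ} (s : Finset (Fin N))
    (A : (Fin N → Fin M) → ℝ) (h : IsCPRepr A Z)
    (ρ : Fin r → ({i // i ∈ s} → Fin M)) (κ : Fin r → ({i // i ∈ sᶜ} → Fin M)) :
    (Matrix.of fun k l => A (mrg s (ρ k) (κ l))).rank ≤ Z := by
  classical
  obtain ⟨lam, a, ha⟩ := h
  set B : Matrix (Fin r) (Fin Z) ℝ :=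
    Matrix.of fun k z => lam z * ∏ i : {i // i ∈ s}, a z i.1 (ρ k i) with hB
  set C : Matrix (Fin Z) (Fin r) ℝ :=
    Matrix.of fun z l => ∏ i : {i // i ∈ sᶜ}, a z i.1 (κ l i) with hC
  have hBC : (Matrix.of fun k l => A (mrg s (ρ k) (κ l))) = B * C := by
    ext k l
    rw [Matrix.mul_apply]
    simp only [Matrix.of_apply, hB, hC]
    rw [ha]
    refine Finset.sum_congr rfl fun z _ => ?_
    rw [mul_assoc]
    congr 1
    rw [← Finset.prod_mul_prod_compl s (fun i => a z i (mrg s (ρ k) (κ l) i))]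
    congr 1
    · rw [← Finset.prod_attach s (fun i => a z i (mrg s (ρ k) (κ l) i)),
        ← Finset.univ_eq_attach]
      refine Finset.prod_congr rfl fun i _ => ?_
      congr 1
      show mrg s (ρ k) (κ l) i.1 = ρ k i
      exact dif_pos i.2
    · rw [← Finset.prod_attach sᶜ (fun i => a z i (mrg s (ρ k) (κ l) i)),
        ← Finset.univ_eq_attach]
      refine Finset.prod_congr rfl fun i _ => ?_
      congr 1
      show mrg s (ρ k) (κ l) i.1 = κ l i
      exact dif_neg (Finset.mem_compl.mp i.2)
  calc (Matrix.of fun k l => A (mrg s (ρ k) (κ l))).rank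
      = (B * C).rank := by rw [hBC]
    _ ≤ B.rank := Matrix.rank_mul_le_left B C
    _ ≤ Fintype.card (Fin Z) := Matrix.rank_le_card_width B
    _ = Z := Fintype.card_fin Z

theorem det_zero_of_cp {N M Z r : ℕ} (s : Finset (Fin N))
    (A : (Fin N → Fin M) → ℝ) (h : IsCPRepr A Z) (hZ : Z < r)
    (ρ : Fin r → ({i // i ∈ s} → Fin M)) (κ : Fin r → ({i // i ∈ sᶜ} → Fin M)) :
    (Matrix.of fun k l => A (mrg s (ρ k) (κ l))).det = 0 := by
  by_contra hd
  have hu : IsUnit (Matrix.of fun k l => A (mrg s (ρ k) (κ l))) :=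
    (Matrix.isUnit_iff_isUnit_det _).mpr (isUnit_iff_ne_zero.mpr hd)
  have h1 := Matrix.rank_of_isUnit _ hu
  have h2 := rank_le_of_cp s A h ρ κ
  rw [h1] at h2
  simp only [Fintype.card_fin] at h2
  omega

/-- The index type for the Tucker parameters viewed as a family of real variables. -/
abbrev TuckIdx (N M : ℕ) (J : Fin N → ℕ) :=
  ((∀ i, Fin (J i))) ⊕ (Σ i : Fin N, Fin M × Fin (J i))

/-- The Tucker parameter space. -/
abbrev TuckSp (N M : ℕ) (J : Fin N → ℕ) :=
  ((∀ i, Fin (J i)) → ℝ) × (∀ i : Fin N, Fin M → Fin (J i) → ℝ)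

/-- The parameter space is linearly equivalent to a pi space over the variable index. -/
noncomputable def tuckEquiv (N M : ℕ) (J : Fin N → ℕ) :
    (TuckIdx N M J → ℝ) ≃ₗ[ℝ] TuckSp N M J where
  toFun v := (fun j => v (Sum.inl j), fun i m jj => v (Sum.inr ⟨i, (m, jj)⟩))
  invFun x v := match v with
    | Sum.inl j => x.1 j
    | Sum.inr t => x.2 t.1 t.2.1 t.2.2
  map_add' v w := rfl
  map_smul' c v := rfl
  left_inv v := by funext u; cases u <;> rfl
  right_inv x := rfl

/-- For Lebesgue-almost every choice of Tucker parameters (core `G` and factor matrices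
`U i ∈ ℝ^{M × J i}`), the resulting tensor has CP rank at least
`r = max over nonempty proper subsets p ⊆ {1,…,N} of min (∏_{i∈p} J i) (∏_{i∉p} J i)`:
the set of parameters giving CP rank `< r` has Lebesgue measure zero. -/
theorem tucker_cpRank_lower_bound_ae
    (N M : ℕ) (hN : 2 ≤ N) (hM : 1 ≤ M) (J : Fin N → ℕ)
    (hJpos : ∀ i, 1 ≤ J i) (hJM : ∀ i, J i ≤ M)
    (r : ℕ)
    (hr : r = (Finset.univ.filter
        (fun s : Finset (Fin N) => s.Nonempty ∧ s ≠ Finset.univ)).sup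
        (fun s => min (∏ i ∈ s, J i) (∏ i ∈ sᶜ, J i))) :
    volume {x : ((∀ i, Fin (J i)) → ℝ) × (∀ i : Fin N, Fin M → Fin (J i) → ℝ) |
      cpRank (tuckerTensor J x.1 x.2) < r} = 0 := by
  classical
  haveI : NeZero N := ⟨by omega⟩
  -- pick a maximizing nonempty proper subset `s`
  have h0 : ({0} : Finset (Fin N)) ∈ Finset.univ.filter
      (fun s : Finset (Fin N) => s.Nonempty ∧ s ≠ Finset.univ) := by
    rw [Finset.mem_filter]
    refine ⟨Finset.mem_univ _, Finset.singleton_nonempty _, ?_⟩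
    intro h
    have h1 : (1 : Fin N) ∈ ({0} : Finset (Fin N)) := h ▸ Finset.mem_univ _
    rw [Finset.mem_singleton] at h1
    have hv : (1 : Fin N).val = 1 := by
      rw [Fin.val_one']
      exact Nat.mod_eq_of_lt (by omega)
    rw [h1] at hv
    simp at hv
  obtain ⟨s, hsmem, hsup⟩ := Finset.exists_mem_eq_sup
    (Finset.univ.filter (fun s : Finset (Fin N) => s.Nonempty ∧ s ≠ Finset.univ))
    ⟨_, h0⟩ (fun s => min (∏ i ∈ s, J i) (∏ i ∈ sᶜ, J i))
  have hrmin : r = min (∏ i ∈ s, J i) (∏ i ∈ sᶜ, J i) := hr.trans hsup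
  set α := ∏ i ∈ s, J i with hα
  set β := ∏ i ∈ sᶜ, J i with hβ
  have hrα : r ≤ α := hrmin ▸ min_le_left _ _
  have hrβ : r ≤ β := hrmin ▸ min_le_right _ _
  -- equivalences encoding the row/column blocks
  have hcardP : Fintype.card (∀ i : {x // x ∈ s}, Fin (J i.1)) = α := by
    rw [Fintype.card_pi]
    simp only [Fintype.card_fin]
    exact Finset.prod_coe_sort s J
  have hcardQ : Fintype.card (∀ i : {x // x ∈ sᶜ}, Fin (J i.1)) = β := by
    rw [Fintype.card_pi]
    simp only [Fintype.card_fin]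
    exact Finset.prod_coe_sort sᶜ J
  set eP := Fintype.equivFinOfCardEq hcardP with heP
  set eQ := Fintype.equivFinOfCardEq hcardQ with heQ
  -- the row and column selections
  set ρ : Fin r → ({i // i ∈ s} → Fin M) :=
    fun k i => Fin.castLE (hJM i.1) ((eP.symm (Fin.castLE hrα k)) i) with hρ
  set κ : Fin r → ({i // i ∈ sᶜ} → Fin M) :=
    fun l i => Fin.castLE (hJM i.1) ((eQ.symm (Fin.castLE hrβ l)) i) with hκ
  -- the polynomial whose zero set contains all bad parameters
  set e := tuckEquiv N M J with he
  set pM : Matrix (Fin r) (Fin r) (MvPolynomial (TuckIdx N M J) ℝ) :=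
    Matrix.of fun k l =>
      ∑ j : ∀ i, Fin (J i), MvPolynomial.X (Sum.inl j) *
        ∏ i, MvPolynomial.X (Sum.inr ⟨i, (mrg s (ρ k) (κ l) i, j i)⟩) with hpM
  set P : MvPolynomial (TuckIdx N M J) ℝ := pM.det with hP
  -- evaluation of the polynomial computes the minor determinant
  have heval : ∀ x : TuckSp N M J, MvPolynomial.eval (e.symm x) P
      = (Matrix.of fun k l => tuckerTensor J x.1 x.2 (mrg s (ρ k) (κ l))).det := by
    intro x
    rw [hP, RingHom.map_det]
    congr 1
    ext k l
    simp only [RingHom.mapMatrix_apply, Matrix.map_apply, Matrix.of_apply, hpM, tuckerTensor,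
      map_sum, map_mul, map_prod, MvPolynomial.eval_X]
    rfl
  -- the witness parameters where the determinant is 1
  set G₀ : (∀ i, Fin (J i)) → ℝ :=
    fun j => if ((eP (fun i => j i.1)) : ℕ) = ((eQ (fun i => j i.1)) : ℕ) then 1 else 0 with hG₀
  set U₀ : ∀ i : Fin N, Fin M → Fin (J i) → ℝ :=
    fun _ m jj => if (m : ℕ) = (jj : ℕ) then 1 else 0 with hU₀
  have hW : ∀ k l : Fin r, tuckerTensor J G₀ U₀ (mrg s (ρ k) (κ l))
      = if k = l then 1 else 0 := by
    intro k l
    set d := mrg s (ρ k) (κ l) with hd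
    set js : ∀ i, Fin (J i) := fun i =>
      if h : i ∈ s then (eP.symm (Fin.castLE hrα k)) ⟨i, h⟩
      else (eQ.symm (Fin.castLE hrβ l)) ⟨i, Finset.mem_compl.mpr h⟩ with hjs
    have hdj : ∀ i, (d i : ℕ) = (js i : ℕ) := by
      intro i
      by_cases h : i ∈ s
      · simp only [hd, hjs, mrg, dif_pos h, hρ, Fin.coe_castLE]
      · simp only [hd, hjs, mrg, dif_neg h, hκ, Fin.coe_castLE]
    have hprod : ∀ j : ∀ i, Fin (J i),
        (∏ i, U₀ i (d i) (j i)) = if j = js then 1 else 0 := by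
      intro j
      have : ∀ i : Fin N, U₀ i (d i) (j i) = if j i = js i then 1 else 0 := by
        intro i
        simp only [hU₀]
        congr 1
        rw [hdj i]
        rw [eq_comm (a := (js i : ℕ))]
        simp [Fin.ext_iff]
      simp_rw [this]
      rw [Finset.prod_boole]
      congr 1
      simp [funext_iff]
    rw [tuckerTensor]
    simp_rw [hprod, mul_ite, mul_one, mul_zero]
    rw [Finset.sum_ite_eq' Finset.univ js G₀]
    simp only [Finset.mem_univ, if_true]
    have h1 : (fun i : {x // x ∈ s} => js i.1) = eP.symm (Fin.castLE hrα k) := by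
      funext i
      simp only [hjs, dif_pos i.2]
    have h2 : (fun i : {x // x ∈ sᶜ} => js i.1) = eQ.symm (Fin.castLE hrβ l) := by
      funext i
      simp only [hjs, dif_neg (Finset.mem_compl.mp i.2)]
    rw [hG₀]
    simp only [h1, h2, Equiv.apply_symm_apply, Fin.coe_castLE]
    congr 1
    simp [Fin.ext_iff]
  -- hence the polynomial is nonzero
  have hPne : P ≠ 0 := by
    intro h
    have h1 := heval (G₀, U₀)
    rw [h] at h1
    have h2 : (Matrix.of fun k l => tuckerTensor J (G₀, U₀).1 (G₀, U₀).2
        (mrg s (ρ k) (κ l))) = (1 : Matrix (Fin r) (Fin r) ℝ) := by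
      ext k l
      rw [Matrix.of_apply, hW k l, Matrix.one_apply]
    rw [h2, Matrix.det_one, map_zero] at h1
    exact one_ne_zero h1.symm
  -- the bad set is contained in the zero set of the polynomial
  set S : Set (TuckSp N M J) := {x | MvPolynomial.eval (e.symm x) P = 0} with hSdef
  have hsub : {x : TuckSp N M J | cpRank (tuckerTensor J x.1 x.2) < r} ⊆ S := by
    intro x hx
    rw [Set.mem_setOf_eq] at hx
    set A := tuckerTensor J x.1 x.2 with hA
    have hmem : cpRank A ∈ {Z | IsCPRepr A Z} :=
      Nat.sInf_mem (⟨_, exists_cp A⟩ : {Z | IsCPRepr A Z}.Nonempty)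
    have hdet := det_zero_of_cp s A hmem hx ρ κ
    rw [hSdef, Set.mem_setOf_eq, heval x]
    exact hdet
  -- the zero set is measurable
  have hSm : MeasurableSet S := by
    have hc : Continuous fun x : TuckSp N M J => MvPolynomial.eval (e.symm x) P := by
      apply (MvPolynomial.continuous_eval (p := P)).comp
      exact LinearMap.continuous_of_finiteDimensional e.symm.toLinearMap
    exact hc.measurable (measurableSet_singleton 0)
  -- and null
  have hSnull : volume S = 0 := by
    haveI h2 : Measure.IsAddHaarMeasure
        (volume : Measure (∀ i : Fin N, Fin M → Fin (J i) → ℝ)) := by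
      haveI : ∀ i : Fin N, (volume : Measure (Fin M → Fin (J i) → ℝ)).IsAddHaarMeasure :=
        fun i => Measure.pi.isAddHaarMeasure _
      exact Measure.pi.isAddHaarMeasure _
    haveI h3 : Measure.IsAddHaarMeasure (volume : Measure (TuckSp N M J)) :=
      Measure.prod.instIsAddHaarMeasure _ _
    refine null_of_linearEquiv_preimage e hSm ?_
    have hpre : (e : (TuckIdx N M J → ℝ) → TuckSp N M J) ⁻¹' S
        = {z : TuckIdx N M J → ℝ | MvPolynomial.eval z P = 0} := by
      ext z
      simp only [hSdef, Set.mem_preimage, Set.mem_setOf_eq, LinearEquiv.symm_apply_apply]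
    rw [hpre]
    exact mvpoly_zero_null P hPne
  exact measure_mono_null hsub hSnull
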